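/- arXiv:2503.12223 — 2 statements merged into one kernel-verified Lean document; each statement's English description precedes it below -/
import Mathlib

section
/- Let P be a finite poset with p elements that has exactly one of the following: a greatest element but no least element, or a least element but no greatest element. Let n ≥ 3p − 1. Then the percolation number satisfies sat_p(n, P) = p. -/
open Finset Filter

/-- An induced copy of the poset `α` inside the family `𝒜` of subsets of `Fin n`
(representing `[n] = {1,…,n}`): an injective map `f : α → Finset (Fin n)` with image
contained in `𝒜` such that `a ≤ b ↔ f a ⊆ f b`. -/
def IsInducedCopy {α : Type*} [PartialOrder α] {n : ℕ}
    (𝒜 : Finset (Finset (Fin n))) (f : α → Finset (Fin n)) : Prop :=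
  Function.Injective f ∧ (∀ a, f a ∈ 𝒜) ∧ ∀ a b : α, a ≤ b ↔ f a ⊆ f b

/-- The family `𝒜` contains an induced copy of the poset `α`. -/
def ContainsCopy (α : Type*) [PartialOrder α] {n : ℕ}
    (𝒜 : Finset (Finset (Fin n))) : Prop :=
  ∃ f : α → Finset (Fin n), IsInducedCopy 𝒜 f

/-- `𝒜` is a percolating family for `α`: the subsets of `[n]` outside `𝒜` can be ordered
as `A₁, …, A_N` so that, for each `i`, adding `A₁, …, Aᵢ` to `𝒜` creates an induced copy
of `α` containing `Aᵢ`. -/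
def IsPercolating (α : Type*) [PartialOrder α] {n : ℕ}
    (𝒜 : Finset (Finset (Fin n))) : Prop :=
  ∃ l : List (Finset (Fin n)), l.Nodup ∧ (∀ S : Finset (Fin n), S ∈ l ↔ S ∉ 𝒜) ∧
    ∀ i : Fin l.length, ∃ f : α → Finset (Fin n),
      IsInducedCopy (𝒜 ∪ (l.take (i + 1)).toFinset) f ∧ ∃ a : α, f a = l.get i

/-- The percolation number `sat_p(n, α)`: the minimum size of an `α`-percolating family
of subsets of `[n]`. -/
noncomputable def satP (α : Type*) [PartialOrder α] (n : ℕ) : ℕ :=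
  sInf {k : ℕ | ∃ 𝒜 : Finset (Finset (Fin n)), IsPercolating α 𝒜 ∧ 𝒜.card = k}

attribute [local instance] Classical.propDecidable
set_option linter.unusedSectionVars false
set_option linter.unusedVariables false

section helpers

lemma take_sub_take {α : Type*} (l : List α) {m k : ℕ} (h : m ≤ k) : l.take m ⊆ l.take k := by
  intro x hx
  have : l.take m = (l.take k).take m := by rw [List.take_take, min_eq_left h]
  rw [this] at hx
  exact List.take_subset _ _ hx

lemma get_mem_take {α : Type*} (l : List α) (i : Fin l.length) : l.get i ∈ l.take (i+1) := by
  rw [List.get_eq_getElem]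
  have hlt : (i:ℕ) < (l.take (i+1)).length := by simp [Nat.lt_succ_iff]
  have h1 : (l.take (i+1))[(i:ℕ)]'hlt = l[(i:ℕ)] := List.getElem_take
  rw [← h1]; exact List.getElem_mem _

lemma pre_mem_take {α : Type*} {l pre M : List α} (hl : l = pre ++ M)
    (hd : ∀ x ∈ pre, x ∉ M) (i : Fin l.length) (hg : l.get i ∈ M) :
    ∀ x ∈ pre, x ∈ l.take (i+1) := by
  subst hl
  intro x hx
  have hlen : pre.length ≤ (i:ℕ) := by
    by_contra hlt
    push_neg at hlt
    have : (pre++M).get i ∈ pre := by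
      rw [List.get_eq_getElem, List.getElem_append_left hlt]
      exact List.getElem_mem _
    exact hd _ this hg
  have hx2 : x ∈ (pre++M).take pre.length := by rw [List.take_left]; exact hx
  exact take_sub_take _ (by omega) hx2

lemma inj_of_iff {P : Type*} [PartialOrder P] {n : ℕ} {f : P → Finset (Fin n)}
    (h : ∀ a b : P, a ≤ b ↔ f a ⊆ f b) : Function.Injective f := by
  intro a b hab
  exact le_antisymm ((h a b).2 (hab ▸ subset_rfl)) ((h b a).2 (hab ▸ subset_rfl))

lemma exists_c {P : Type*} [Fintype P] {n : ℕ} (m : P) (a : Fin n) (U : Finset (Fin n))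
    (ha : a ∉ U) (hcard : Fintype.card P - 1 ≤ U.card) :
    ∃ c : P → Fin n, Function.Injective c ∧ c m = a ∧ ∀ y, y ≠ m → c y ∈ U := by
  classical
  have h1 : Fintype.card {y : P // y ≠ m} = Fintype.card P - 1 := by
    simp [Fintype.card_subtype_compl]
  have h2 : Fintype.card {y : P // y ≠ m} ≤ Fintype.card (↥U) := by
    rw [h1, Fintype.card_coe]; exact hcard
  obtain ⟨e⟩ := Function.Embedding.nonempty_of_card_le h2
  refine ⟨fun y => if h : y = m then a else (e ⟨y, h⟩ : Fin n), ?_, by simp, ?_⟩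
  · intro y z hyz
    by_cases hy : y = m <;> by_cases hz : z = m <;> simp [hy, hz] at hyz ⊢
    · exact absurd ((e ⟨z, hz⟩).2) (hyz ▸ ha)
    · exact absurd ((e ⟨y, hy⟩).2) (hyz ▸ ha)
    · exact hyz
  · intro y hy
    simp only [dif_neg hy]
    exact (e ⟨y, hy⟩).2

end helpers

section construction

variable {P : Type*} [PartialOrder P] [Fintype P] {n : ℕ}

/-- down-set of `y` as a finset -/
noncomputable def Dset (y : P) : Finset P := univ.filter (· ≤ y)

lemma mem_Dset {x y : P} : x ∈ Dset y ↔ x ≤ y := by simp [Dset]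

lemma Dset_subset_iff {y z : P} : Dset y ⊆ Dset z ↔ y ≤ z := by
  constructor
  · intro h; exact mem_Dset.1 (h (mem_Dset.2 le_rfl))
  · intro h x hx; exact mem_Dset.2 ((mem_Dset.1 hx).trans h)

lemma card_Dset_le (y : P) : (Dset y).card ≤ Fintype.card P := by
  simpa using card_le_card (subset_univ (Dset y))

lemma card_Dset_le' {t : P} (ht : IsTop t) {y : P} (hy : y ≠ t) :
    (Dset y).card ≤ Fintype.card P - 1 := by
  have hsub : Dset y ⊆ univ.erase t := by
    intro x hx
    refine mem_erase.2 ⟨?_, mem_univ x⟩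
    rintro rfl
    exact hy (le_antisymm (ht y) (mem_Dset.1 hx))
  calc (Dset y).card ≤ (univ.erase t).card := card_le_card hsub
    _ = Fintype.card P - 1 := by simp [card_erase_of_mem]

noncomputable def Tags (d : P ↪ Fin n) : Finset (Fin n) := univ.map d

lemma card_Tags (d : P ↪ Fin n) : (Tags d).card = Fintype.card P := by simp [Tags]

noncomputable def fD (d : P ↪ Fin n) (y : P) : Finset (Fin n) := (Dset y).map d

lemma fD_subset_Tags (d : P ↪ Fin n) (y : P) : fD d y ⊆ Tags d :=
  map_subset_map.2 (subset_univ _)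

lemma fD_subset_iff (d : P ↪ Fin n) {y z : P} : fD d y ⊆ fD d z ↔ y ≤ z := by
  rw [fD, fD, map_subset_map, Dset_subset_iff]

lemma card_fD (d : P ↪ Fin n) (y : P) : (fD d y).card = (Dset y).card := by simp [fD]

lemma fD_nonempty (d : P ↪ Fin n) (y : P) : (fD d y).Nonempty :=
  ⟨d y, mem_map_of_mem d (mem_Dset.2 le_rfl)⟩

/-- the initial family -/
noncomputable def fam (t : P) (d : P ↪ Fin n) : Finset (Finset (Fin n)) :=
  insert ∅ ((univ.erase t).image (fD d))

lemma fam_card (t : P) (d : P ↪ Fin n) : (fam t d).card = Fintype.card P := by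
  classical
  have h1 : ∅ ∉ (univ.erase t).image (fD d) := by
    simp only [mem_image, not_exists]
    rintro y ⟨-, h⟩
    exact (fD_nonempty d y).ne_empty h
  have h2 : Set.InjOn (fD d) ↑(univ.erase t : Finset P) := by
    intro y _ z _ h
    exact le_antisymm ((fD_subset_iff d).1 h.le) ((fD_subset_iff d).1 h.ge)
  rw [fam, card_insert_of_notMem h1, card_image_of_injOn h2]
  have : (univ.erase t).card = Fintype.card P - 1 := by simp [card_erase_of_mem]
  rw [this]
  have : 1 ≤ Fintype.card P := @Fintype.card_pos _ _ ⟨t⟩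
  omega

lemma fam_subset_Tags {t : P} {d : P ↪ Fin n} {X : Finset (Fin n)} (hX : X ∈ fam t d) :
    X ⊆ Tags d := by
  rw [fam, mem_insert] at hX
  rcases hX with rfl | hX
  · exact empty_subset _
  · obtain ⟨y, _, rfl⟩ := mem_image.1 hX
    exact fD_subset_Tags d y

lemma fam_card_lt {t : P} (ht : IsTop t) {d : P ↪ Fin n} {X : Finset (Fin n)}
    (hX : X ∈ fam t d) (hp2 : 2 ≤ Fintype.card P) : X.card < Fintype.card P := by
  rw [fam, mem_insert] at hX
  rcases hX with rfl | hX
  · simpa using @Fintype.card_pos _ _ ⟨t⟩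
  · obtain ⟨y, hy, rfl⟩ := mem_image.1 hX
    have := card_Dset_le' ht (mem_erase.1 hy).1
    rw [card_fD]
    omega

end construction

section copies

variable {P : Type*} [PartialOrder P] [Fintype P] {n : ℕ}

lemma good1 {t : P} (ht : IsTop t) (d : P ↪ Fin n)
    {S : Finset (Fin n)} (hTS : Tags d ⊆ S) :
    ∃ f : P → Finset (Fin n), (∀ a, f a ∈ insert S (fam t d)) ∧
      (∀ a b : P, a ≤ b ↔ f a ⊆ f b) ∧ f t = S := by
  classical
  refine ⟨fun y => if y = t then S else fD d y, ?_, ?_, by simp⟩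
  · intro a
    by_cases ha : a = t
    · simp [ha]
    · simp only [if_neg ha]
      exact mem_insert_of_mem (by
        rw [fam]
        exact mem_insert_of_mem (mem_image_of_mem _ (mem_erase.2 ⟨ha, mem_univ a⟩)))
  · intro a b
    have hcardS : Fintype.card P ≤ S.card := by
      rw [← card_Tags d]; exact card_le_card hTS
    by_cases ha : a = t <;> by_cases hb : b = t
    · simp [ha, hb]
    · simp only [if_pos ha, if_neg hb]
      constructor
      · intro h; exact absurd (le_antisymm (ht b) (ha ▸ h)) hb
      · intro h
        have h1 : S.card ≤ (fD d b).card := card_le_card h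
        have h2 := card_Dset_le' ht hb
        rw [card_fD] at h1
        have hp1 : 1 ≤ Fintype.card P := @Fintype.card_pos _ _ ⟨t⟩
        omega
    · simp only [if_neg ha, if_pos hb]
      exact ⟨fun _ => (fD_subset_Tags d a).trans hTS, fun _ => hb ▸ ht a⟩
    · simp only [if_neg ha, if_neg hb]
      exact (fD_subset_iff d).symm

lemma minCopy {t m : P} (ht : IsTop t) (hm : ∀ y : P, y ≤ m → y = m) (hmt : m ≠ t)
    (A B : Finset (Fin n)) (c : P → Fin n) (hc : Function.Injective c)
    (hcmA : c m ∈ A) (hBA : A \ {c m} ⊆ B) (hcmB : c m ∉ B)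
    (hcy : ∀ y : P, y ≠ m → c y ∉ B ∧ c y ∉ A)
    (ℬ : Finset (Finset (Fin n))) (huniv : Finset.univ ∈ ℬ)
    (hmem : ∀ y : P, y ≠ m → y ≠ t → B ∪ (Dset y).image c ∈ ℬ)
    (hne : ∀ y : P, y ≠ m → y ≠ t → B ∪ (Dset y).image c ≠ Finset.univ)
    (hAne : A ≠ Finset.univ) :
    ∃ f : P → Finset (Fin n), (∀ a, f a ∈ insert A ℬ) ∧
      (∀ a b : P, a ≤ b ↔ f a ⊆ f b) ∧ f m = A := by
  classical
  set g : P → Finset (Fin n) :=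
    fun y => if y = m then A else if y = t then Finset.univ else B ∪ (Dset y).image c with hg
  have hcnotB : ∀ w : P, c w ∉ B := by
    intro w
    by_cases hw : w = m
    · rw [hw]; exact hcmB
    · exact (hcy w hw).1
  have sub_iff : ∀ {y z : P}, ((Dset y).image c ⊆ B ∪ (Dset z).image c ↔ y ≤ z) := by
    intro y z
    constructor
    · intro h
      rw [← Dset_subset_iff (y := y) (z := z)]
      intro w hw
      have h1 : c w ∈ B ∪ (Dset z).image c := h (mem_image_of_mem c hw)
      rcases mem_union.1 h1 with h2 | h2
      · exact absurd h2 (hcnotB w)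
      · obtain ⟨w', hw', hww'⟩ := mem_image.1 h2
        rwa [← hc hww']
    · intro h
      exact (image_subset_image (Dset_subset_iff.2 h)).trans subset_union_right
  have hAsub : ∀ {z : P}, z ≠ m → (A ⊆ B ∪ (Dset z).image c ↔ m ≤ z) := by
    intro z hz
    constructor
    · intro h
      have h1 : c m ∈ B ∪ (Dset z).image c := h hcmA
      rcases mem_union.1 h1 with h2 | h2
      · exact absurd h2 hcmB
      · obtain ⟨w', hw', hww'⟩ := mem_image.1 h2
        rw [← hc hww']
        exact mem_Dset.1 hw'
    · intro h
      intro u hu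
      by_cases hum : u = c m
      · rw [hum]
        exact mem_union_right _ (mem_image_of_mem c (mem_Dset.2 h))
      · exact mem_union_left _ (hBA (mem_sdiff.2 ⟨hu, by simp [hum]⟩))
  have hnotsubA : ∀ {y : P}, y ≠ m → ¬ (B ∪ (Dset y).image c ⊆ A) := by
    intro y hy h
    exact (hcy y hy).2 (h (mem_union_right _ (mem_image_of_mem c (mem_Dset.2 le_rfl))))
  refine ⟨g, ?_, ?_, by simp [hg]⟩
  · intro a
    by_cases ham : a = m
    · simp [hg, ham]
    · by_cases hat : a = t
      · simp only [hg, if_neg ham, if_pos hat]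
        exact mem_insert_of_mem huniv
      · simp only [hg, if_neg ham, if_neg hat]
        exact mem_insert_of_mem (hmem a ham hat)
  · intro a b
    by_cases ham : a = m <;> by_cases hbm : b = m
    · simp [hg, ham, hbm]
    · by_cases hbt : b = t
      · simp only [hg, if_pos ham, if_neg hbm, if_pos hbt]
        exact ⟨fun _ => subset_univ _, fun _ => ham ▸ hbt ▸ ht m⟩
      · simp only [hg, if_pos ham, if_neg hbm, if_neg hbt]
        rw [ham, hAsub hbm]
    · by_cases hat : a = t
      · simp only [hg, if_neg ham, if_pos hat, if_pos hbm]
        constructor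
        · intro h
          exact absurd ((hm a (hbm ▸ h)).symm.trans hat) hmt
        · intro h
          exact absurd (univ_subset_iff.1 h) hAne
      · simp only [hg, if_neg ham, if_neg hat, if_pos hbm]
        constructor
        · intro h; exact absurd (hm a (hbm ▸ h)) ham
        · intro h; exact absurd h (hnotsubA ham)
    · by_cases hat : a = t <;> by_cases hbt : b = t
      · simp [hat, hbt]
      · simp only [hg, if_neg ham, if_neg hbm, if_pos hat, if_neg hbt]
        constructor
        · intro h; exact absurd (le_antisymm (ht b) (hat ▸ h)) hbt
        · intro h; exact absurd (univ_subset_iff.1 h) (hne b hbm hbt)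
      · simp only [hg, if_neg ham, if_neg hbm, if_neg hat, if_pos hbt]
        exact ⟨fun _ => subset_univ _, fun _ => hbt ▸ ht a⟩
      · simp only [hg, if_neg ham, if_neg hbm, if_neg hat, if_neg hbt]
        rw [union_subset_iff]
        constructor
        · intro h; exact ⟨subset_union_left, sub_iff.2 h⟩
        · intro h; exact sub_iff.1 h.2

end copies

section maxcopy

variable {P : Type*} [PartialOrder P] [Fintype P] {n : ℕ}

lemma maxCopy {t x : P} (ht : IsTop t) (hxt : x ≠ t) (hx : ∀ y : P, x ≤ y → y = x ∨ y = t)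
    (A : Finset (Fin n)) (c : P → Fin n) (hc : Function.Injective c)
    (hcA : ∀ y : P, c y ∈ A) (r : Fin n) (hr : r ∉ A)
    (hcard : Fintype.card P < A.card) (hpn : Fintype.card P < n)
    (ℬ : Finset (Finset (Fin n))) (huniv : Finset.univ ∈ ℬ)
    (hmem : ∀ y : P, y ≠ x → y ≠ t →
      ((Dset y).image c ∪ (if y ≤ x then ∅ else {r})) ∈ ℬ) :
    ∃ f : P → Finset (Fin n), (∀ a, f a ∈ insert A ℬ) ∧
      (∀ a b : P, a ≤ b ↔ f a ⊆ f b) ∧ f x = A := by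
  classical
  set g : P → Finset (Fin n) := fun y => if y = x then A else if y = t then Finset.univ
    else (Dset y).image c ∪ (if y ≤ x then ∅ else {r}) with hg
  have hgen : ∀ y : P, y ≠ x → y ≠ t →
      ((Dset y).image c ∪ (if y ≤ x then ∅ else {r})).card ≤ Fintype.card P := by
    intro y hyx hyt
    calc ((Dset y).image c ∪ (if y ≤ x then ∅ else {r})).card
        ≤ ((Dset y).image c).card + (if y ≤ x then (∅:Finset (Fin n)) else {r}).card :=
          card_union_le _ _
      _ ≤ (Dset y).card + 1 := by
          gcongr
          · exact card_image_le
          · split <;> simp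
      _ ≤ (Fintype.card P - 1) + 1 := by
          have := card_Dset_le' ht hyt
          omega
      _ ≤ Fintype.card P := by
          have : 1 ≤ Fintype.card P := @Fintype.card_pos _ _ ⟨t⟩
          omega
  have hAne : A ≠ Finset.univ := fun h => hr (h ▸ mem_univ r)
  have hgne : ∀ y : P, y ≠ x → y ≠ t →
      ((Dset y).image c ∪ (if y ≤ x then ∅ else {r})) ≠ Finset.univ := by
    intro y hyx hyt h
    have h1 := hgen y hyx hyt
    rw [h, card_univ, Fintype.card_fin] at h1
    omega
  have hnotA : ∀ y : P, y ≠ x → y ≠ t →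
      ¬ (A ⊆ (Dset y).image c ∪ (if y ≤ x then ∅ else {r})) := by
    intro y hyx hyt h
    have h1 := card_le_card h
    have h2 := hgen y hyx hyt
    omega
  have hsub : ∀ {y z : P}, y ≠ t → z ≠ t →
      (((Dset y).image c ∪ (if y ≤ x then ∅ else {r})) ⊆
        ((Dset z).image c ∪ (if z ≤ x then ∅ else {r})) ↔ y ≤ z) := by
    intro y z hyt hzt
    constructor
    · intro h
      rw [← Dset_subset_iff (y := y) (z := z)]
      intro w hw
      have h1 : c w ∈ _ := h (mem_union_left _ (mem_image_of_mem c hw))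
      rcases mem_union.1 h1 with h2 | h2
      · obtain ⟨w', hw', hww'⟩ := mem_image.1 h2
        rwa [← hc hww']
      · exfalso
        by_cases h4 : z ≤ x
        · simp [if_pos h4] at h2
        · simp [if_neg h4] at h2
          exact hr (h2 ▸ hcA w)
    · intro h
      apply union_subset
      · exact (image_subset_image (Dset_subset_iff.2 h)).trans subset_union_left
      · by_cases hyx : y ≤ x
        · simp [if_pos hyx]
        · have hzx : ¬ z ≤ x := fun hzx => hyx (h.trans hzx)
          simp only [if_neg hyx, if_neg hzx]
          exact subset_union_right
  have hsubA : ∀ {y : P}, y ≠ x → y ≠ t →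
      (((Dset y).image c ∪ (if y ≤ x then ∅ else {r})) ⊆ A ↔ y ≤ x) := by
    intro y hyx hyt
    constructor
    · intro h
      by_contra hyx2
      exact hr (h (mem_union_right _ (by simp [if_neg hyx2])))
    · intro h
      simp only [if_pos h]
      rw [union_empty]
      intro u hu
      obtain ⟨w, _, rfl⟩ := mem_image.1 hu
      exact hcA w
  refine ⟨g, ?_, ?_, by simp [hg]⟩
  · intro a
    by_cases hax : a = x
    · simp [hg, hax]
    · by_cases hat : a = t
      · simp only [hg, if_neg hax, if_pos hat]
        exact mem_insert_of_mem huniv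
      · simp only [hg, if_neg hax, if_neg hat]
        exact mem_insert_of_mem (hmem a hax hat)
  · intro a b
    by_cases hax : a = x <;> by_cases hbx : b = x
    · simp [hax, hbx]
    · by_cases hbt : b = t
      · simp only [hg, if_pos hax, if_neg hbx, if_pos hbt]
        exact ⟨fun _ => subset_univ _, fun _ => hax ▸ hbt ▸ ht x⟩
      · simp only [hg, if_pos hax, if_neg hbx, if_neg hbt]
        constructor
        · intro h
          rcases hx b (hax ▸ h) with h1 | h1
          · exact absurd h1 hbx
          · exact absurd h1 hbt
        · intro h
          exact absurd h (hnotA b hbx hbt)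
    · by_cases hat : a = t
      · simp only [hg, if_neg hax, if_pos hat, if_pos hbx]
        constructor
        · intro h
          have hbt2 : b = t := le_antisymm (ht b) (hat ▸ h)
          rw [hbx] at hbt2
          exact absurd hbt2 hxt
        · intro h
          exact absurd (univ_subset_iff.1 h) hAne
      · simp only [hg, if_neg hax, if_neg hat, if_pos hbx]
        rw [hbx, hsubA hax hat]
    · by_cases hat : a = t <;> by_cases hbt : b = t
      · simp [hat, hbt]
      · simp only [hg, if_neg hax, if_neg hbx, if_pos hat, if_neg hbt]
        constructor
        · intro h; exact absurd (le_antisymm (ht b) (hat ▸ h)) hbt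
        · intro h; exact absurd (univ_subset_iff.1 h) (hgne b hbx hbt)
      · simp only [hg, if_neg hax, if_neg hbx, if_neg hat, if_pos hbt]
        exact ⟨fun _ => subset_univ _, fun _ => hbt ▸ ht a⟩
      · simp only [hg, if_neg hax, if_neg hbx, if_neg hat, if_neg hbt]
        exact (hsub hat hbt).symm

end maxcopy

section phases

variable {P : Type*} [PartialOrder P] [Fintype P] {n : ℕ}

noncomputable def ph1 (d : P ↪ Fin n) : Finset (Finset (Fin n)) :=
  univ.filter (fun S => Tags d ⊆ S)

noncomputable def ph2 (d : P ↪ Fin n) : Finset (Finset (Fin n)) :=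
  univ.filter (fun S => ¬ Tags d ⊆ S ∧ ¬ S ⊆ Tags d ∧
    (S ∪ Tags d).card + Fintype.card P ≤ n + 1)

noncomputable def ph2b (t : P) (d : P ↪ Fin n) : Finset (Finset (Fin n)) :=
  univ.filter (fun S => S ⊆ Tags d ∧ ¬ Tags d ⊆ S ∧ S ∉ fam t d)

noncomputable def ph3 (d : P ↪ Fin n) : Finset (Finset (Fin n)) :=
  univ.filter (fun S => ¬ Tags d ⊆ S ∧ ¬ S ⊆ Tags d ∧
    n + 1 < (S ∪ Tags d).card + Fintype.card P)

variable {t m x : P} {d : P ↪ Fin n}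

lemma univ_mem_ph1 (d : P ↪ Fin n) : (Finset.univ : Finset (Fin n)) ∈ ph1 d := by
  simp [ph1]

lemma good2 (ht : IsTop t) (hmin : ∀ y : P, y ≤ m → y = m) (hmt : m ≠ t)
    (hp2 : 2 ≤ Fintype.card P) (hn : 3 * Fintype.card P ≤ n + 1)
    {S : Finset (Fin n)} (hS : S ∈ ph2 d) :
    ∃ f : P → Finset (Fin n), (∀ a, f a ∈ insert S (fam t d ∪ ph1 d)) ∧
      (∀ a b : P, a ≤ b ↔ f a ⊆ f b) ∧ f m = S := by
  classical
  rw [ph2, mem_filter] at hS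
  obtain ⟨-, h1, h2, h3⟩ := hS
  obtain ⟨a, ha⟩ := not_subset.1 h2
  obtain ⟨haS, haT⟩ := ha
  have haU : a ∈ S ∪ Tags d := mem_union_left _ haS
  have hcardn : (S ∪ Tags d).card ≤ n := by
    simpa using card_le_card (subset_univ (S ∪ Tags d))
  have hUcard : Fintype.card P - 1 ≤ (Finset.univ \ (S ∪ Tags d)).card := by
    rw [card_sdiff_of_subset (subset_univ _), card_univ, Fintype.card_fin]
    omega
  obtain ⟨c, hc, hcm, hcU⟩ := exists_c m a (Finset.univ \ (S ∪ Tags d))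
    (by simp [haS]) hUcard
  set B : Finset (Fin n) := (S ∪ Tags d).erase a with hB
  have hTB : Tags d ⊆ B := by
    intro u hu
    exact mem_erase.2 ⟨fun h => haT (h ▸ hu), mem_union_right _ hu⟩
  have hBcard : B.card = (S ∪ Tags d).card - 1 := card_erase_of_mem haU
  obtain ⟨f, hf1, hf2, hf3⟩ := minCopy ht hmin hmt S B c hc
    (by rw [hcm]; exact haS)
    (by rw [hcm]; intro u hu; obtain ⟨huS, hua⟩ := mem_sdiff.1 hu
        exact mem_erase.2 ⟨by simpa using hua, mem_union_left _ huS⟩)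
    (by rw [hcm, hB]; exact notMem_erase a _)
    (by intro y hy
        have h5 := hcU y hy
        rw [Finset.mem_sdiff] at h5
        refine ⟨fun h => h5.2 (mem_of_mem_erase h), fun h => h5.2 (mem_union_left _ h)⟩)
    (fam t d ∪ ph1 d)
    (mem_union_right _ (univ_mem_ph1 d))
    (by intro y hym hyt
        exact mem_union_right _ (by
          rw [ph1, mem_filter]
          exact ⟨mem_univ _, hTB.trans (subset_union_left)⟩))
    (by intro y hym hyt h
        have hcard := congrArg Finset.card h
        rw [card_univ, Fintype.card_fin] at hcard
        have hc1 : (B ∪ (Dset y).image c).card ≤ B.card + (Dset y).card :=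
          (card_union_le _ _).trans (by gcongr; exact card_image_le)
        have hc2 := card_Dset_le' ht hyt
        omega)
    (fun h => h1 (h ▸ subset_univ (Tags d)))
  exact ⟨f, hf1, hf2, hf3⟩

end phases

section phases2

variable {P : Type*} [PartialOrder P] [Fintype P] {n : ℕ}
variable {t m x : P} {d : P ↪ Fin n}

lemma good2b (ht : IsTop t) (hmin : ∀ y : P, y ≤ m → y = m) (hmt : m ≠ t)
    (hp2 : 2 ≤ Fintype.card P) (hn : 3 * Fintype.card P ≤ n + 1)
    {S : Finset (Fin n)} (hS : S ∈ ph2b t d) :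
    ∃ f : P → Finset (Fin n), (∀ a, f a ∈ insert S (fam t d ∪ ph1 d ∪ ph2 d)) ∧
      (∀ a b : P, a ≤ b ↔ f a ⊆ f b) ∧ f m = S := by
  classical
  rw [ph2b, mem_filter] at hS
  obtain ⟨-, hsub, h1, hnf⟩ := hS
  have hSne : S.Nonempty := by
    rcases S.eq_empty_or_nonempty with rfl | h
    · exact absurd (mem_insert_self _ _) (by rw [fam] at hnf; exact hnf)
    · exact h
  obtain ⟨a, haS⟩ := hSne
  have haT : a ∈ Tags d := hsub haS
  have hpn : Fintype.card P ≤ n := by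
    have : (Tags d).card ≤ n := by simpa using card_le_card (subset_univ (Tags d))
    rw [card_Tags] at this; exact this
  have hUcard : Fintype.card P - 1 ≤ (Finset.univ \ Tags d).card := by
    rw [card_sdiff_of_subset (subset_univ _), card_univ, Fintype.card_fin, card_Tags]
    omega
  obtain ⟨c, hc, hcm, hcU⟩ := exists_c m a (Finset.univ \ Tags d) (by simp [haT]) hUcard
  have hScard : S.card < Fintype.card P := by
    rw [← card_Tags d]
    exact card_lt_card ⟨hsub, h1⟩
  have hcUT : ∀ y : P, y ≠ m → c y ∉ Tags d := by
    intro y hy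
    have := hcU y hy
    rw [Finset.mem_sdiff] at this
    exact this.2
  obtain ⟨f, hf1, hf2, hf3⟩ := minCopy ht hmin hmt S (S.erase a) c hc
    (by rw [hcm]; exact haS)
    (by rw [hcm]; intro u hu; obtain ⟨huS, hua⟩ := mem_sdiff.1 hu
        exact mem_erase.2 ⟨by simpa using hua, huS⟩)
    (by rw [hcm]; exact notMem_erase a _)
    (by intro y hy
        have h5 := hcUT y hy
        exact ⟨fun h => h5 (hsub (mem_of_mem_erase h)), fun h => h5 (hsub h)⟩)
    (fam t d ∪ ph1 d ∪ ph2 d)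
    (mem_union_left _ (mem_union_right _ (univ_mem_ph1 d)))
    (by intro y hym hyt
        refine mem_union_right _ ?_
        rw [ph2, mem_filter]
        have hBS : S.erase a ⊆ Tags d := (erase_subset _ _).trans hsub
        refine ⟨mem_univ _, ?_, ?_, ?_⟩
        · -- ¬ Tags ⊆ g'
          intro hTg
          apply h1
          intro u hu
          have hug := hTg hu
          rcases mem_union.1 hug with h4 | h4
          · exact mem_of_mem_erase h4
          · obtain ⟨w, hw, hwu⟩ := mem_image.1 h4
            by_cases hwm : w = m
            · rw [hwm, hcm] at hwu; rw [← hwu]; exact haS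
            · exact absurd (hwu ▸ hu) (hcUT w hwm)
        · -- ¬ g' ⊆ Tags
          intro hgT
          exact hcUT y hym (hgT (mem_union_right _ (mem_image_of_mem c (mem_Dset.2 le_rfl))))
        · -- card bound
          have hsub2 : S.erase a ∪ (Dset y).image c ∪ Tags d ⊆ Tags d ∪ (Dset y).image c := by
            intro u hu
            rcases mem_union.1 hu with h4 | h4
            · rcases mem_union.1 h4 with h5 | h5
              · exact mem_union_left _ (hsub (mem_of_mem_erase h5))
              · exact mem_union_right _ h5
            · exact mem_union_left _ h4
          have hc1 := card_le_card hsub2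
          have hc2 : (Tags d ∪ (Dset y).image c).card ≤ Fintype.card P + (Fintype.card P - 1) := by
            refine (card_union_le _ _).trans ?_
            have := (card_image_le (s := Dset y) (f := c)).trans (card_Dset_le' ht hyt)
            rw [card_Tags]
            omega
          omega)
    (by intro y hym hyt h
        have hcard := congrArg Finset.card h
        rw [card_univ, Fintype.card_fin] at hcard
        have hc1 : (S.erase a ∪ (Dset y).image c).card ≤ S.card + (Dset y).card :=
          (card_union_le _ _).trans
            (Nat.add_le_add (card_le_card (erase_subset _ _)) card_image_le)
        have hc2 := card_Dset_le' ht hyt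
        omega)
    (by intro h
        rw [h] at hScard
        rw [card_univ, Fintype.card_fin] at hScard
        omega)
  exact ⟨f, hf1, hf2, hf3⟩

lemma smallPresent (ht : IsTop t) (hp2 : 2 ≤ Fintype.card P) (hn : 3 * Fintype.card P ≤ n + 1)
    {X : Finset (Fin n)} (hX : X.card ≤ Fintype.card P) :
    X ∈ fam t d ∪ ph1 d ∪ ph2 d ∪ ph2b t d := by
  classical
  by_cases hXT : X ⊆ Tags d
  · by_cases hXf : X ∈ fam t d
    · exact mem_union_left _ (mem_union_left _ (mem_union_left _ hXf))
    · by_cases hTX : Tags d ⊆ X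
      · exact mem_union_left _ (mem_union_left _ (mem_union_right _ (by
          rw [ph1, mem_filter]; exact ⟨mem_univ _, hTX⟩)))
      · exact mem_union_right _ (by
          rw [ph2b, mem_filter]; exact ⟨mem_univ _, hXT, hTX, hXf⟩)
  · by_cases hTX : Tags d ⊆ X
    · exfalso
      apply hXT
      have : X = Tags d := (eq_of_subset_of_card_le hTX (by rw [card_Tags]; exact hX)).symm
      rw [this]
    · refine mem_union_left _ (mem_union_right _ ?_)
      rw [ph2, mem_filter]
      refine ⟨mem_univ _, hTX, hXT, ?_⟩
      have := card_union_le X (Tags d)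
      rw [card_Tags] at this
      omega

lemma good3 (ht : IsTop t) (hxt : x ≠ t) (hx : ∀ y : P, x ≤ y → y = x ∨ y = t)
    (hp2 : 2 ≤ Fintype.card P) (hn : 3 * Fintype.card P ≤ n + 1)
    {S : Finset (Fin n)} (hS : S ∈ ph3 d) :
    ∃ f : P → Finset (Fin n),
      (∀ a, f a ∈ insert S (fam t d ∪ ph1 d ∪ ph2 d ∪ ph2b t d)) ∧
      (∀ a b : P, a ≤ b ↔ f a ⊆ f b) ∧ f x = S := by
  classical
  rw [ph3, mem_filter] at hS
  obtain ⟨-, h1, h2, h3⟩ := hS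
  have hScard : Fintype.card P < S.card := by
    have := card_union_le S (Tags d)
    rw [card_Tags] at this
    have hcardn : (S ∪ Tags d).card ≤ n := by
      simpa using card_le_card (subset_univ (S ∪ Tags d))
    omega
  have hemb : Fintype.card P ≤ Fintype.card (↥S) := by
    rw [Fintype.card_coe]; omega
  obtain ⟨e⟩ := Function.Embedding.nonempty_of_card_le hemb
  set c : P → Fin n := fun y => (e y : Fin n) with hcdef
  have hc : Function.Injective c := fun y z h => e.injective (Subtype.ext h)
  have hcA : ∀ y : P, c y ∈ S := fun y => (e y).2
  have hSu : S ≠ Finset.univ := fun h => h1 (h ▸ subset_univ (Tags d))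
  have hr : ∃ r, r ∉ S := by
    by_contra h
    push_neg at h
    exact hSu (eq_univ_iff_forall.2 h)
  obtain ⟨r, hr⟩ := hr
  have hpn : Fintype.card P < n := by
    have : S.card ≤ n := by simpa using card_le_card (subset_univ S)
    omega
  obtain ⟨f, hf1, hf2, hf3⟩ := maxCopy ht hxt hx S c hc hcA r hr hScard hpn
    (fam t d ∪ ph1 d ∪ ph2 d ∪ ph2b t d)
    (mem_union_left _ (mem_union_left _ (mem_union_right _ (univ_mem_ph1 d))))
    (by intro y hyx hyt
        apply smallPresent ht hp2 hn
        refine (card_union_le _ _).trans ?_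
        have h5 := (card_image_le (s := Dset y) (f := c)).trans (card_Dset_le' ht hyt)
        have h6 : (if y ≤ x then (∅ : Finset (Fin n)) else {r}).card ≤ 1 := by
          split <;> simp
        have : 1 ≤ Fintype.card P := by omega
        omega)
  exact ⟨f, hf1, hf2, hf3⟩

end phases2

section assembly

variable {P : Type*} [PartialOrder P] [Fintype P] {n : ℕ}
variable {t : P} {d : P ↪ Fin n}

lemma mem_ph1_iff {S : Finset (Fin n)} : S ∈ ph1 d ↔ Tags d ⊆ S := by simp [ph1]

lemma mem_ph2_iff {S : Finset (Fin n)} : S ∈ ph2 d ↔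
    (¬ Tags d ⊆ S ∧ ¬ S ⊆ Tags d ∧ (S ∪ Tags d).card + Fintype.card P ≤ n + 1) := by
  simp only [ph2, mem_filter, mem_univ, true_and]

lemma mem_ph2b_iff {S : Finset (Fin n)} : S ∈ ph2b t d ↔
    (S ⊆ Tags d ∧ ¬ Tags d ⊆ S ∧ S ∉ fam t d) := by
  simp only [ph2b, mem_filter, mem_univ, true_and]

lemma mem_ph3_iff {S : Finset (Fin n)} : S ∈ ph3 d ↔
    (¬ Tags d ⊆ S ∧ ¬ S ⊆ Tags d ∧ n + 1 < (S ∪ Tags d).card + Fintype.card P) := by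
  simp only [ph3, mem_filter, mem_univ, true_and]

lemma phases_cover (ht : IsTop t) (hp2 : 2 ≤ Fintype.card P) {S : Finset (Fin n)} :
    (S ∈ ph1 d ∨ S ∈ ph2 d ∨ S ∈ ph2b t d ∨ S ∈ ph3 d) ↔ S ∉ fam t d := by
  constructor
  · rintro (h | h | h | h)
    · rw [mem_ph1_iff] at h
      intro hf
      have h1 := fam_card_lt ht hf hp2
      have h2 := card_le_card h
      rw [card_Tags] at h2
      omega
    · exact fun hf => (mem_ph2_iff.1 h).2.1 (fam_subset_Tags hf)
    · exact (mem_ph2b_iff.1 h).2.2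
    · exact fun hf => (mem_ph3_iff.1 h).2.1 (fam_subset_Tags hf)
  · intro hf
    by_cases c1 : Tags d ⊆ S
    · exact Or.inl (mem_ph1_iff.2 c1)
    · by_cases c2 : S ⊆ Tags d
      · exact Or.inr (Or.inr (Or.inl (mem_ph2b_iff.2 ⟨c2, c1, hf⟩)))
      · by_cases c3 : (S ∪ Tags d).card + Fintype.card P ≤ n + 1
        · exact Or.inr (Or.inl (mem_ph2_iff.2 ⟨c1, c2, c3⟩))
        · exact Or.inr (Or.inr (Or.inr (mem_ph3_iff.2 ⟨c1, c2, by omega⟩)))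

theorem construction (t : P) (ht : IsTop t) (w : P) (hw : w ≠ t)
    (hn : 3 * Fintype.card P ≤ n + 1) :
    ∃ 𝒜 : Finset (Finset (Fin n)), IsPercolating P 𝒜 ∧ 𝒜.card = Fintype.card P := by
  classical
  have hnt : Nontrivial P := ⟨⟨w, t, hw⟩⟩
  have hp2 : 2 ≤ Fintype.card P := Fintype.one_lt_card
  have hpn : Fintype.card P ≤ n := by omega
  obtain ⟨d⟩ : Nonempty (P ↪ Fin n) :=
    Function.Embedding.nonempty_of_card_le (by simpa using hpn)
  -- a minimal element
  obtain ⟨m, -, hmin'⟩ := Finset.exists_minimal (s := (univ : Finset P)) ⟨t, mem_univ t⟩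
  have hmin : ∀ y : P, y ≤ m → y = m := by
    intro y h
    by_contra hne
    exact hne (le_antisymm h (hmin' (mem_univ y) h))
  have hmt : m ≠ t := by
    intro h
    exact hw (hmin w (h ▸ ht w) ▸ h)
  -- a maximal element below t
  obtain ⟨x, hxmem, hxmax⟩ := Finset.exists_maximal (s := univ.erase t)
    ⟨w, mem_erase.2 ⟨hw, mem_univ w⟩⟩
  have hxt : x ≠ t := (mem_erase.1 hxmem).1
  have hx : ∀ y : P, x ≤ y → y = x ∨ y = t := by
    intro y h
    by_cases hyt : y = t
    · exact Or.inr hyt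
    · left
      rcases h.lt_or_eq with h1 | h1
      · exact absurd (hxmax (mem_erase.2 ⟨hyt, mem_univ y⟩) h1.le) (not_le_of_gt h1)
      · exact h1.symm
  refine ⟨fam t d, ?_, fam_card t d⟩
  set L1 := (ph1 d).toList with hL1
  set L2 := (ph2 (P := P) d).toList with hL2
  set L3 := (ph2b t d).toList with hL3
  set L4 := (ph3 (P := P) d).toList with hL4
  set l : List (Finset (Fin n)) := L1 ++ L2 ++ L3 ++ L4 with hldef
  -- disjointness facts
  have d1 : ∀ S ∈ ph1 d, S ∉ ph2 (P := P) d ∧ S ∉ ph2b t d ∧ S ∉ ph3 (P := P) d := by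
    intro S hS
    rw [mem_ph1_iff] at hS
    exact ⟨fun h => (mem_ph2_iff.1 h).1 hS, fun h => (mem_ph2b_iff.1 h).2.1 hS,
      fun h => (mem_ph3_iff.1 h).1 hS⟩
  have d2 : ∀ S ∈ ph2 (P := P) d, S ∉ ph2b t d ∧ S ∉ ph3 (P := P) d := by
    intro S hS
    exact ⟨fun h => (mem_ph2_iff.1 hS).2.1 (mem_ph2b_iff.1 h).1,
      fun h => by
        have := (mem_ph2_iff.1 hS).2.2
        have := (mem_ph3_iff.1 h).2.2
        omega⟩
  have d3 : ∀ S ∈ ph2b t d, S ∉ ph3 (P := P) d := by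
    intro S hS
    exact fun h => (mem_ph3_iff.1 h).2.1 (mem_ph2b_iff.1 hS).1
  have hmeml : ∀ S : Finset (Fin n), S ∈ l ↔ S ∉ fam t d := by
    intro S
    rw [hldef]
    simp only [List.mem_append, hL1, hL2, hL3, hL4, mem_toList]
    rw [← phases_cover ht hp2]
    tauto
  refine ⟨l, ?_, hmeml, ?_⟩
  · -- Nodup
    rw [hldef]
    rw [List.nodup_append, List.nodup_append, List.nodup_append]
    refine ⟨⟨⟨nodup_toList _, nodup_toList _, ?_⟩, nodup_toList _, ?_⟩, nodup_toList _, ?_⟩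
    · intro a ha
      rw [hL1, mem_toList] at ha
      intro b hb hab; subst hab
      rw [hL2, mem_toList] at hb
      exact (d1 a ha).1 hb
    · intro a ha b hb hab; subst hab
      rw [hL3, mem_toList] at hb
      rcases List.mem_append.1 ha with h | h
      · rw [hL1, mem_toList] at h
        exact (d1 a h).2.1 hb
      · rw [hL2, mem_toList] at h
        exact (d2 a h).1 hb
    · intro a ha b hb hab; subst hab
      rw [hL4, mem_toList] at hb
      rcases List.mem_append.1 ha with h | h
      · rcases List.mem_append.1 h with h2 | h2
        · rw [hL1, mem_toList] at h2
          exact (d1 a h2).2.2 hb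
        · rw [hL2, mem_toList] at h2
          exact (d2 a h2).2 hb
      · rw [hL3, mem_toList] at h
        exact d3 a h hb
  · -- the percolation steps
    intro i
    set S := l.get i with hSdef
    have hSl : S ∈ l := by rw [hSdef]; exact List.get_mem l i
    have hSf : S ∉ fam t d := (hmeml S).1 hSl
    have hSin : S ∈ (l.take ((i:ℕ)+1)).toFinset := List.mem_toFinset.2 (get_mem_take l i)
    rcases (phases_cover ht hp2 (S := S)).2 hSf with h | h | h | h
    · -- phase 1
      obtain ⟨f, hf1, hf2, hf3⟩ := good1 ht d (mem_ph1_iff.1 h)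
      refine ⟨f, ⟨inj_of_iff hf2, ?_, hf2⟩, t, hf3⟩
      intro a
      rcases mem_insert.1 (hf1 a) with h4 | h4
      · exact mem_union_right _ (h4 ▸ hSin)
      · exact mem_union_left _ h4
    · -- phase 2
      obtain ⟨f, hf1, hf2, hf3⟩ := good2 ht hmin hmt hp2 hn h
      have hpre : ∀ u ∈ L1, u ∈ l.take ((i:ℕ)+1) := by
        refine pre_mem_take (pre := L1) (M := L2 ++ (L3 ++ L4))
          (by rw [hldef]; simp [List.append_assoc]) ?_ i ?_
        · intro u hu
          rw [hL1, mem_toList] at hu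
          simp only [List.mem_append, hL2, hL3, hL4, mem_toList]
          push_neg
          exact ⟨(d1 u hu).1, (d1 u hu).2.1, (d1 u hu).2.2⟩
        · rw [← hSdef]
          exact List.mem_append_left _ (by rw [hL2, mem_toList]; exact h)
      refine ⟨f, ⟨inj_of_iff hf2, ?_, hf2⟩, m, hf3⟩
      intro a
      rcases mem_insert.1 (hf1 a) with h4 | h4
      · exact mem_union_right _ (h4 ▸ hSin)
      · rcases mem_union.1 h4 with h5 | h5
        · exact mem_union_left _ h5
        · refine mem_union_right _ (List.mem_toFinset.2 (hpre _ ?_))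
          rw [hL1, mem_toList]
          exact h5
    · -- phase 2b
      obtain ⟨f, hf1, hf2, hf3⟩ := good2b ht hmin hmt hp2 hn h
      have hpre : ∀ u ∈ L1 ++ L2, u ∈ l.take ((i:ℕ)+1) := by
        refine pre_mem_take (pre := L1 ++ L2) (M := L3 ++ L4)
          (by rw [hldef]; simp [List.append_assoc]) ?_ i ?_
        · intro u hu
          simp only [List.mem_append, hL3, hL4, mem_toList]
          push_neg
          rcases List.mem_append.1 hu with h5 | h5
          · rw [hL1, mem_toList] at h5
            exact ⟨(d1 u h5).2.1, (d1 u h5).2.2⟩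
          · rw [hL2, mem_toList] at h5
            exact ⟨(d2 u h5).1, (d2 u h5).2⟩
        · rw [← hSdef]
          exact List.mem_append_left _ (by rw [hL3, mem_toList]; exact h)
      refine ⟨f, ⟨inj_of_iff hf2, ?_, hf2⟩, m, hf3⟩
      intro a
      rcases mem_insert.1 (hf1 a) with h4 | h4
      · exact mem_union_right _ (h4 ▸ hSin)
      · rcases mem_union.1 h4 with h5 | h5
        · rcases mem_union.1 h5 with h6 | h6
          · exact mem_union_left _ h6
          · refine mem_union_right _ (List.mem_toFinset.2 (hpre _ ?_))
            exact List.mem_append_left _ (by rw [hL1, mem_toList]; exact h6)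
        · refine mem_union_right _ (List.mem_toFinset.2 (hpre _ ?_))
          exact List.mem_append_right _ (by rw [hL2, mem_toList]; exact h5)
    · -- phase 3
      obtain ⟨f, hf1, hf2, hf3⟩ := good3 ht hxt hx hp2 hn h
      have hpre : ∀ u ∈ L1 ++ L2 ++ L3, u ∈ l.take ((i:ℕ)+1) := by
        refine pre_mem_take (pre := L1 ++ L2 ++ L3) (M := L4) (by rw [hldef]) ?_ i ?_
        · intro u hu
          rw [hL4, mem_toList]
          rcases List.mem_append.1 hu with h5 | h5
          · rcases List.mem_append.1 h5 with h6 | h6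
            · rw [hL1, mem_toList] at h6
              exact (d1 u h6).2.2
            · rw [hL2, mem_toList] at h6
              exact (d2 u h6).2
          · rw [hL3, mem_toList] at h5
            exact d3 u h5
        · rw [← hSdef]
          rw [hL4, mem_toList]
          exact h
      refine ⟨f, ⟨inj_of_iff hf2, ?_, hf2⟩, x, hf3⟩
      intro a
      rcases mem_insert.1 (hf1 a) with h4 | h4
      · exact mem_union_right _ (h4 ▸ hSin)
      · rcases mem_union.1 h4 with h5 | h5
        · rcases mem_union.1 h5 with h6 | h6
          · rcases mem_union.1 h6 with h7 | h7
            · exact mem_union_left _ h7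
            · refine mem_union_right _ (List.mem_toFinset.2 (hpre _ ?_))
              exact List.mem_append_left _ (List.mem_append_left _
                (by rw [hL1, mem_toList]; exact h7))
          · refine mem_union_right _ (List.mem_toFinset.2 (hpre _ ?_))
            exact List.mem_append_left _ (List.mem_append_right _
              (by rw [hL2, mem_toList]; exact h6))
        · refine mem_union_right _ (List.mem_toFinset.2 (hpre _ ?_))
          exact List.mem_append_right _ (by rw [hL3, mem_toList]; exact h5)

end assembly

section final

lemma perc_dual {α : Type*} [PartialOrder α] {n : ℕ} {𝒜 : Finset (Finset (Fin n))}
    (h : IsPercolating αᵒᵈ 𝒜) : IsPercolating α (𝒜.image compl) := by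
  classical
  obtain ⟨l, hnd, hmem, hstep⟩ := h
  have hcompl_inj : Function.Injective (compl : Finset (Fin n) → Finset (Fin n)) :=
    compl_injective
  have hmm : ∀ (l' : List (Finset (Fin n))) (S : Finset (Fin n)),
      S ∈ l'.map compl ↔ Sᶜ ∈ l' := by
    intro l' S
    simp only [List.mem_map]
    constructor
    · rintro ⟨x, hx, rfl⟩; rwa [compl_compl]
    · intro h; exact ⟨Sᶜ, h, compl_compl S⟩
  refine ⟨l.map compl, hnd.map hcompl_inj, ?_, ?_⟩
  · intro S
    rw [hmm, hmem]
    constructor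
    · intro h hS
      obtain ⟨x, hx, hxS⟩ := mem_image.1 hS
      rw [← hxS, compl_compl] at h
      exact h hx
    · intro h hS
      exact h (mem_image.2 ⟨Sᶜ, hS, compl_compl S⟩)
  · intro i
    have hlen : (l.map compl).length = l.length := List.length_map _
    set i' : Fin l.length := ⟨(i : ℕ), by rw [← hlen]; exact i.isLt⟩ with hi'
    obtain ⟨f, ⟨finj, fmem, fiff⟩, a, ha⟩ := hstep i'
    have htake : ((l.map compl).take ((i:ℕ)+1)).toFinset
        = (l.take ((i:ℕ)+1)).toFinset.image compl := by
      ext X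
      simp only [List.mem_toFinset, mem_image]
      rw [← List.map_take, hmm]
      constructor
      · intro h2; exact ⟨Xᶜ, h2, compl_compl X⟩
      · rintro ⟨x, hx, rfl⟩; rwa [compl_compl]
    refine ⟨fun b => (f (OrderDual.toDual b))ᶜ, ⟨?_, ?_, ?_⟩, OrderDual.ofDual a, ?_⟩
    · intro b1 b2 hb
      have := hcompl_inj hb
      exact OrderDual.toDual.injective (finj this)
    · intro b
      rw [htake, ← image_union]
      exact mem_image_of_mem _ (fmem (OrderDual.toDual b))
    · intro b1 b2
      show b1 ≤ b2 ↔ (f (OrderDual.toDual b1))ᶜ ⊆ (f (OrderDual.toDual b2))ᶜ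
      rw [compl_subset_compl]
      exact fiff (OrderDual.toDual b2) (OrderDual.toDual b1)
    · have hget : (l.map compl).get i = (l.get i')ᶜ := by
        simp [List.get_eq_getElem, List.getElem_map, hi']
      rw [hget, ← ha]
      rfl

lemma lower_bound {P : Type*} [PartialOrder P] [Fintype P]
    (h : Xor' (∃ m : P, IsTop m) (∃ m : P, IsBot m)) {n : ℕ}
    (hn : 3 * Fintype.card P ≤ n + 1)
    (𝒜 : Finset (Finset (Fin n))) (hperc : IsPercolating P 𝒜) :
    Fintype.card P ≤ 𝒜.card := by
  classical
  obtain ⟨l, hnd, hmem, hstep⟩ := hperc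
  have hne : Nonempty P := by
    rcases h with ⟨⟨t, _⟩, -⟩ | ⟨⟨b, _⟩, -⟩
    exacts [⟨t⟩, ⟨b⟩]
  have hp1 : 1 ≤ Fintype.card P := Fintype.card_pos
  obtain ⟨E, hforb⟩ : ∃ E : Finset (Fin n), ∀ (ℬ : Finset (Finset (Fin n)))
      (f : P → Finset (Fin n)), IsInducedCopy ℬ f → ∀ a, f a ≠ E := by
    rcases h with ⟨-, hnb⟩ | ⟨-, hnt⟩
    · refine ⟨∅, ?_⟩
      rintro ℬ f ⟨-, -, fiff⟩ a ha
      exact hnb ⟨a, fun b => (fiff a b).2 (by rw [ha]; exact empty_subset _)⟩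
    · refine ⟨Finset.univ, ?_⟩
      rintro ℬ f ⟨-, -, fiff⟩ a ha
      exact hnt ⟨a, fun b => (fiff b a).2 (by rw [ha]; exact subset_univ _)⟩
  have hE : E ∈ 𝒜 := by
    by_contra hE
    obtain ⟨i, hi⟩ := List.mem_iff_get.1 ((hmem E).2 hE)
    obtain ⟨f, hcopy, a, ha⟩ := hstep i
    exact hforb _ f hcopy a (ha.trans hi)
  cases l with
  | nil =>
    have huniv : (Finset.univ : Finset (Finset (Fin n))) ⊆ 𝒜 := by
      intro S _
      by_contra hS
      exact List.not_mem_nil ((hmem S).2 hS)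
    have h1 : (Finset.univ : Finset (Finset (Fin n))).card ≤ 𝒜.card := card_le_card huniv
    rw [card_univ] at h1
    have h2 : Fintype.card (Finset (Fin n)) = 2 ^ n := by
      simp [Fintype.card_finset]
    rw [h2] at h1
    have h3 : n < 2 ^ n := Nat.lt_two_pow_self
    omega
  | cons A l' =>
    have hi0 : (0 : ℕ) < (A :: l').length := Nat.succ_pos _
    obtain ⟨f, ⟨finj, fmem, fiff⟩, a0, ha0⟩ := hstep ⟨0, hi0⟩
    have hget : (A :: l').get ⟨0, hi0⟩ = A := rfl
    rw [hget] at ha0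
    have htake : ((A :: l').take (0+1)).toFinset = {A} := by
      simp
    have hAnot : A ∉ 𝒜 := (hmem A).1 List.mem_cons_self
    have hsub : univ.image f ⊆ (insert A 𝒜).erase E := by
      intro u hu
      obtain ⟨b, -, rfl⟩ := mem_image.1 hu
      refine mem_erase.2 ⟨hforb _ f ⟨finj, fmem, fiff⟩ b, ?_⟩
      have := fmem b
      rw [htake] at this
      rcases mem_union.1 this with h1 | h1
      · exact mem_insert_of_mem h1
      · rw [mem_singleton.1 h1]; exact mem_insert_self A 𝒜
    have h1 : (univ.image f).card = Fintype.card P := by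
      rw [card_image_of_injective _ finj, card_univ]
    have h2 : ((insert A 𝒜).erase E).card = (insert A 𝒜).card - 1 :=
      card_erase_of_mem (mem_insert_of_mem hE)
    have h3 : (insert A 𝒜).card = 𝒜.card + 1 := card_insert_of_notMem hAnot
    have h4 := card_le_card hsub
    omega

/-- If `P` is a finite poset with `p` elements having exactly one of a
greatest element and a least element, and `n ≥ 3p - 1`, then `sat_p(n, P) = p`. -/
theorem statement16 (P : Type*) [PartialOrder P] [Fintype P]
    (h : Xor' (∃ m : P, IsTop m) (∃ m : P, IsBot m))
    (n : ℕ) (hn : 3 * Fintype.card P - 1 ≤ n) :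
    satP P n = Fintype.card P := by
  classical
  have hp1 : 1 ≤ Fintype.card P := by
    rcases h with ⟨⟨t, _⟩, -⟩ | ⟨⟨b, _⟩, -⟩
    exacts [@Fintype.card_pos _ _ ⟨t⟩, @Fintype.card_pos _ _ ⟨b⟩]
  have hn' : 3 * Fintype.card P ≤ n + 1 := by omega
  have hmemset : Fintype.card P ∈
      {k : ℕ | ∃ 𝒜 : Finset (Finset (Fin n)), IsPercolating P 𝒜 ∧ 𝒜.card = k} := by
    rcases h with ⟨⟨t, ht⟩, hnb⟩ | ⟨⟨b, hb⟩, hnt⟩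
    · push_neg at hnb
      obtain ⟨w, hw⟩ : ∃ w, ¬ t ≤ w := by
        by_contra hcon
        push_neg at hcon
        exact hnb t hcon
      have hwt : w ≠ t := fun hh => hw (le_of_eq hh.symm)
      obtain ⟨𝒜, h1, h2⟩ := construction t ht w hwt hn'
      exact ⟨𝒜, h1, h2⟩
    · push_neg at hnt
      obtain ⟨w, hw⟩ : ∃ w, ¬ w ≤ b := by
        by_contra hcon
        push_neg at hcon
        exact hnt b hcon
      have hcard_dual : Fintype.card Pᵒᵈ = Fintype.card P := rfl
      have htd : IsTop (OrderDual.toDual b) := by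
        intro y
        exact hb (OrderDual.ofDual y)
      have hwd : OrderDual.toDual w ≠ OrderDual.toDual b := by
        intro hh
        exact hw (le_of_eq (OrderDual.toDual.injective hh))
      obtain ⟨𝒜, h1, h2⟩ := construction (P := Pᵒᵈ) (OrderDual.toDual b) htd
        (OrderDual.toDual w) hwd (by rw [hcard_dual]; exact hn')
      refine ⟨𝒜.image compl, perc_dual h1, ?_⟩
      rw [card_image_of_injective _ compl_injective, h2, hcard_dual]
  refine le_antisymm (Nat.sInf_le hmemset) (le_csInf ⟨_, hmemset⟩ ?_)
  rintro k ⟨𝒜, hperc, rfl⟩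
  exact lower_bound h hn' 𝒜 hperc

end final
end

section
/- For any finite poset Q and the 3-element antichain A3, the induced saturation number sat*(n, Q * A3) tends to infinity as n tends to infinity, where Q * A3 is the glued poset with every element of A3 strictly below every element of Q. -/
set_option linter.unusedSectionVars false
set_option linter.unnecessarySeqFocus false


open Finset Filter

/-- `𝒜` is an `α`-saturated family: it contains no induced copy of `α`, but adding any
set not in `𝒜` creates an induced copy of `α`. -/
def IsSaturatedFamily (α : Type*) [PartialOrder α] {n : ℕ}
    (𝒜 : Finset (Finset (Fin n))) : Prop :=
  ¬ ContainsCopy α 𝒜 ∧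
    ∀ S : Finset (Fin n), S ∉ 𝒜 → ContainsCopy α (insert S 𝒜)

/-- The induced saturation number `sat*(n, α)`: the minimum size of an `α`-saturated
family of subsets of `[n]`. -/
noncomputable def satStar (α : Type*) [PartialOrder α] (n : ℕ) : ℕ :=
  sInf {k : ℕ | ∃ 𝒜 : Finset (Finset (Fin n)), IsSaturatedFamily α 𝒜 ∧ 𝒜.card = k}

/-- The $3$-element antichain. -/
def Antichain3 : Type := Fin 3

instance : PartialOrder Antichain3 where
  le x y := x = y
  le_refl _ := rfl
  le_trans _ _ _ h1 h2 := Eq.trans h1 h2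
  le_antisymm _ _ h _ := h

namespace S19

def A0 : Antichain3 := (0 : Fin 3)
def A1 : Antichain3 := (1 : Fin 3)
def A2 : Antichain3 := (2 : Fin 3)

theorem a3_le_iff {x y : Antichain3} : x ≤ y ↔ x = y := Iff.rfl

theorem a3_cases (i : Antichain3) : i = A0 ∨ i = A1 ∨ i = A2 := by
  have h : ∀ j : Fin 3, j = (0 : Fin 3) ∨ j = (1 : Fin 3) ∨ j = (2 : Fin 3) := by decide
  exact h i

theorem a3_ne {a b : Fin 3} (hab : a ≠ b) :
    (show Antichain3 from a) ≠ (show Antichain3 from b) := fun h => hab h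

instance : DecidableEq Antichain3 := fun a b =>
  (inferInstance : DecidableEq (Fin 3)) a b

theorem A1_ne_A0 : A1 ≠ A0 := a3_ne (a := 1) (b := 0) (by decide)
theorem A2_ne_A0 : A2 ≠ A0 := a3_ne (a := 2) (b := 0) (by decide)
theorem A2_ne_A1 : A2 ≠ A1 := a3_ne (a := 2) (b := 1) (by decide)

theorem exists_two_ne (i : Antichain3) : ∃ j k : Antichain3, j ≠ i ∧ k ≠ i ∧ j ≠ k := by
  rcases a3_cases i with rfl | rfl | rfl
  · exact ⟨A1, A2, A1_ne_A0, A2_ne_A0, (a3_ne (a := 1) (b := 2) (by decide) : A1 ≠ A2)⟩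
  · exact ⟨A0, A2, A1_ne_A0.symm, A2_ne_A1, (a3_ne (a := 0) (b := 2) (by decide) : A0 ≠ A2)⟩
  · exact ⟨A0, A1, A2_ne_A0.symm, A2_ne_A1.symm, A1_ne_A0.symm⟩

variable {n : ℕ} {Q : Type*} [PartialOrder Q] [Fintype Q]

def Incomp {n : ℕ} (X Y : Finset (Fin n)) : Prop := ¬ X ⊆ Y ∧ ¬ Y ⊆ X

theorem Incomp.symm {X Y : Finset (Fin n)} (h : Incomp X Y) : Incomp Y X := ⟨h.2, h.1⟩

theorem Incomp.ne {X Y : Finset (Fin n)} (h : Incomp X Y) : X ≠ Y := fun he =>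
  h.1 (he ▸ Finset.Subset.refl X)

def Poor (𝒜 : Finset (Finset (Fin n))) (S : Finset (Fin n)) : Prop :=
  ¬ ∃ X Y Z, X ∈ 𝒜 ∧ Y ∈ 𝒜 ∧ Z ∈ 𝒜 ∧ X ⊆ S ∧ Y ⊆ S ∧ Z ⊆ S ∧
      Incomp X Y ∧ Incomp X Z ∧ Incomp Y Z

theorem Poor.mono {𝒜 : Finset (Finset (Fin n))} {S T : Finset (Fin n)}
    (hST : S ⊆ T) (h : Poor 𝒜 T) : Poor 𝒜 S := by
  rintro ⟨X, Y, Z, hX, hY, hZ, h1, h2, h3, i1, i2, i3⟩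
  exact h ⟨X, Y, Z, hX, hY, hZ, h1.trans hST, h2.trans hST, h3.trans hST, i1, i2, i3⟩

def QCopy (𝒜 : Finset (Finset (Fin n))) (h : Q → Finset (Fin n)) : Prop :=
  Function.Injective h ∧ (∀ p, h p ∈ 𝒜) ∧ ∀ p p' : Q, p ≤ p' ↔ h p ⊆ h p'

def hub (h : Q → Finset (Fin n)) : Finset (Fin n) := Finset.univ.inf h

theorem hub_subset (h : Q → Finset (Fin n)) (p : Q) : hub h ⊆ h p :=
  Finset.le_iff_subset.mp (Finset.inf_le (Finset.mem_univ p))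

theorem mk_copy {𝒜 : Finset (Finset (Fin n))} (h : Q → Finset (Fin n)) (hQ : QCopy 𝒜 h)
    {X Y Z : Finset (Fin n)}
    (hX : X ∈ 𝒜) (hY : Y ∈ 𝒜) (hZ : Z ∈ 𝒜)
    (hXh : X ⊆ hub h) (hYh : Y ⊆ hub h) (hZh : Z ⊆ hub h)
    (hXY : Incomp X Y) (hXZ : Incomp X Z) (hYZ : Incomp Y Z) :
    ContainsCopy (Antichain3 ⊕ₗ Q) 𝒜 := by
  classical
  set g : Antichain3 → Finset (Fin n) :=
    fun i => if i = A0 then X else if i = A1 then Y else Z with hgdef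
  have hg0 : g A0 = X := by
    rw [hgdef]
    show (if A0 = A0 then X else if A0 = A1 then Y else Z) = X
    rw [if_pos rfl]
  have hg1 : g A1 = Y := by
    rw [hgdef]
    show (if A1 = A0 then X else if A1 = A1 then Y else Z) = Y
    rw [if_neg A1_ne_A0, if_pos rfl]
  have hg2 : g A2 = Z := by
    rw [hgdef]
    show (if A2 = A0 then X else if A2 = A1 then Y else Z) = Z
    rw [if_neg A2_ne_A0, if_neg A2_ne_A1]
  have hgmem : ∀ i, g i ∈ 𝒜 := by
    intro i
    rcases a3_cases i with rfl | rfl | rfl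
    · rwa [hg0]
    · rwa [hg1]
    · rwa [hg2]
  have hghub : ∀ i, g i ⊆ hub h := by
    intro i
    rcases a3_cases i with rfl | rfl | rfl
    · rwa [hg0]
    · rwa [hg1]
    · rwa [hg2]
  have hginc : ∀ i j, i ≠ j → Incomp (g i) (g j) := by
    intro i j hij
    rcases a3_cases i with rfl | rfl | rfl <;> rcases a3_cases j with rfl | rfl | rfl <;>
      first
      | exact absurd rfl hij
      | (rw [hg0, hg1]; exact hXY)
      | (rw [hg0, hg2]; exact hXZ)
      | (rw [hg1, hg0]; exact hXY.symm)
      | (rw [hg1, hg2]; exact hYZ)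
      | (rw [hg2, hg0]; exact hXZ.symm)
      | (rw [hg2, hg1]; exact hYZ.symm)
  have hmix : ∀ (i : Antichain3) (p : Q), ¬ h p ⊆ g i := by
    intro i p hc
    obtain ⟨j, k, hji, hki, hjk⟩ := exists_two_ne i
    exact (hginc j i hji).1 ((hghub j).trans ((hub_subset h p).trans hc))
  have hne_mix : ∀ (i : Antichain3) (p : Q), g i ≠ h p := fun i p he =>
    hmix i p (he ▸ Finset.Subset.refl _)
  refine ⟨fun a => Sum.elim g h (ofLex a), ?_, ?_, ?_⟩
  · intro a b hab
    obtain ⟨a', rfl⟩ : ∃ a', toLex a' = a := ⟨ofLex a, rfl⟩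
    obtain ⟨b', rfl⟩ : ∃ b', toLex b' = b := ⟨ofLex b, rfl⟩
    rcases a' with i | p <;> rcases b' with j | q
    · simp only [ofLex_toLex, Sum.elim_inl] at hab
      by_contra hne
      have hij : i ≠ j := by
        intro he; exact hne (by rw [he])
      exact (hginc i j hij).1 (hab ▸ Finset.Subset.refl _)
    · simp only [ofLex_toLex, Sum.elim_inl, Sum.elim_inr] at hab
      exact absurd hab (hne_mix i q)
    · simp only [ofLex_toLex, Sum.elim_inl, Sum.elim_inr] at hab
      exact absurd hab.symm (hne_mix j p)
    · simp only [ofLex_toLex, Sum.elim_inr] at hab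
      rw [hQ.1 hab]
  · intro a
    obtain ⟨a', rfl⟩ : ∃ a', toLex a' = a := ⟨ofLex a, rfl⟩
    rcases a' with i | p
    · simpa only [ofLex_toLex, Sum.elim_inl] using hgmem i
    · simpa only [ofLex_toLex, Sum.elim_inr] using hQ.2.1 p
  · intro a b
    obtain ⟨a', rfl⟩ : ∃ a', toLex a' = a := ⟨ofLex a, rfl⟩
    obtain ⟨b', rfl⟩ : ∃ b', toLex b' = b := ⟨ofLex b, rfl⟩
    rcases a' with i | p <;> rcases b' with j | q
    · simp only [ofLex_toLex, Sum.elim_inl]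
      rw [Sum.Lex.inl_le_inl_iff]
      constructor
      · intro hle
        rw [a3_le_iff.1 hle]
      · intro hsub
        by_contra hne
        exact (hginc i j (fun he => hne (a3_le_iff.2 he))).1 hsub
    · simp only [ofLex_toLex, Sum.elim_inl, Sum.elim_inr]
      exact iff_of_true (Sum.Lex.inl_le_inr _ _) ((hghub i).trans (hub_subset h q))
    · simp only [ofLex_toLex, Sum.elim_inl, Sum.elim_inr]
      exact iff_of_false Sum.Lex.not_inr_le_inl (hmix j p)
    · simp only [ofLex_toLex, Sum.elim_inr]
      rw [Sum.Lex.inr_le_inr_iff]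
      exact hQ.2.2 p q

theorem hub_poor {𝒜 : Finset (Finset (Fin n))}
    (hsat : IsSaturatedFamily (Antichain3 ⊕ₗ Q) 𝒜)
    {h : Q → Finset (Fin n)} (hQ : QCopy 𝒜 h) : Poor 𝒜 (hub h) := by
  rintro ⟨X, Y, Z, hX, hY, hZ, h1, h2, h3, i1, i2, i3⟩
  exact hsat.1 (mk_copy h hQ hX hY hZ h1 h2 h3 i1 i2 i3)

theorem serve {𝒜 : Finset (Finset (Fin n))}
    (hsat : IsSaturatedFamily (Antichain3 ⊕ₗ Q) 𝒜)
    {S : Finset (Fin n)} (hS : S ∉ 𝒜) (hpoor : Poor 𝒜 S) :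
    ∃ (h : Q → Finset (Fin n)) (B C : Finset (Fin n)), QCopy 𝒜 h ∧ B ∈ 𝒜 ∧ C ∈ 𝒜 ∧
      Incomp S B ∧ Incomp S C ∧ Incomp B C ∧ S ⊆ hub h ∧ B ⊆ hub h ∧ C ⊆ hub h := by
  obtain ⟨f, finj, fmem, ford⟩ := hsat.2 S hS
  have hIncomp : ∀ i i' : Antichain3, i ≠ i' →
      Incomp (f (toLex (Sum.inl i))) (f (toLex (Sum.inl i'))) := by
    intro i i' hii
    constructor
    · intro hsub
      exact hii (a3_le_iff.1 (Sum.Lex.inl_le_inl_iff.1 ((ford _ _).2 hsub)))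
    · intro hsub
      exact hii (a3_le_iff.1 (Sum.Lex.inl_le_inl_iff.1 ((ford _ _).2 hsub))).symm
  by_cases him : ∀ a, f a ≠ S
  · exact absurd ⟨f, finj, fun a => (Finset.mem_insert.1 (fmem a)).resolve_left (him a), ford⟩
      hsat.1
  · push_neg at him
    obtain ⟨a₀, ha₀⟩ := him
    obtain ⟨s₀, rfl⟩ : ∃ s₀, toLex s₀ = a₀ := ⟨ofLex a₀, rfl⟩
    rcases s₀ with i₀ | p₀
    · -- S sits at a bottom (antichain) slot
      obtain ⟨j, k, hji, hki, hjk⟩ := exists_two_ne i₀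
      have hmem' : ∀ i : Antichain3, i ≠ i₀ → f (toLex (Sum.inl i)) ∈ 𝒜 := by
        intro i hi
        refine (Finset.mem_insert.1 (fmem _)).resolve_left ?_
        intro he
        apply hi
        have := finj (he.trans ha₀.symm)
        exact Sum.inl.inj (congrArg ofLex this)
      set h : Q → Finset (Fin n) := fun p => f (toLex (Sum.inr p)) with hhdef
      have hne_inr : ∀ p : Q, f (toLex (Sum.inr p)) ≠ S := by
        intro p he
        have := finj (he.trans ha₀.symm)
        exact Sum.inr_ne_inl (congrArg ofLex this)
      have hQC : QCopy 𝒜 h := by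
        refine ⟨?_, ?_, ?_⟩
        · intro p q hpq
          have := finj hpq
          exact Sum.inr.inj (congrArg ofLex this)
        · intro p
          exact (Finset.mem_insert.1 (fmem _)).resolve_left (hne_inr p)
        · intro p q
          rw [← Sum.Lex.inr_le_inr_iff (α := Antichain3) (a := p) (b := q)]
          exact ford _ _
      have hsub_hub : ∀ i : Antichain3, f (toLex (Sum.inl i)) ⊆ hub h := by
        intro i
        refine Finset.le_iff_subset.mp (Finset.le_inf ?_)
        intro p _
        refine Finset.le_iff_subset.mpr ?_
        exact (ford _ _).1 (Sum.Lex.inl_le_inr _ _)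
      refine ⟨h, f (toLex (Sum.inl j)), f (toLex (Sum.inl k)), hQC, hmem' j hji,
        hmem' k hki, ?_, ?_, hIncomp j k hjk, ?_, hsub_hub j, hsub_hub k⟩
      · rw [← ha₀]; exact hIncomp i₀ j (Ne.symm hji)
      · rw [← ha₀]; exact hIncomp i₀ k (Ne.symm hki)
      · rw [← ha₀]; exact hsub_hub i₀
    · -- S sits at a Q-slot: contradicts poorness
      exfalso
      apply hpoor
      have hmem' : ∀ i : Antichain3, f (toLex (Sum.inl i)) ∈ 𝒜 := by
        intro i
        refine (Finset.mem_insert.1 (fmem _)).resolve_left ?_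
        intro he
        have := finj (he.trans ha₀.symm)
        exact Sum.inl_ne_inr (congrArg ofLex this)
      have hsubS : ∀ i : Antichain3, f (toLex (Sum.inl i)) ⊆ S := by
        intro i
        rw [← ha₀]
        exact (ford _ _).1 (Sum.Lex.inl_le_inr _ _)
      exact ⟨_, _, _, hmem' A0, hmem' A1, hmem' A2, hsubS A0, hsubS A1, hsubS A2,
        hIncomp A0 A1 A1_ne_A0.symm, hIncomp A0 A2 A2_ne_A0.symm, hIncomp A1 A2 A2_ne_A1.symm⟩

theorem maximal_poor_mem {𝒜 : Finset (Finset (Fin n))}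
    (hsat : IsSaturatedFamily (Antichain3 ⊕ₗ Q) 𝒜)
    {U : Finset (Fin n)} (hU : Poor 𝒜 U)
    (hmax : ∀ T, Poor 𝒜 T → U ⊆ T → T = U) : U ∈ 𝒜 := by
  by_contra hU𝒜
  obtain ⟨h, B, C, hQC, hB, hC, iSB, iSC, iBC, hSh, hBh, hCh⟩ := serve hsat hU𝒜 hU
  have hhub := hmax (hub h) (hub_poor hsat hQC) hSh
  exact iSB.2 (hhub ▸ hBh)

theorem exists_big_poor (𝒜 : Finset (Finset (Fin n))) :
    ∃ W : Finset (Fin n), Poor 𝒜 W ∧ n ≤ W.card + 𝒜.card ^ 3 := by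
  classical
  set Tri := ((𝒜 ×ˢ 𝒜) ×ˢ 𝒜).filter
    (fun t => Incomp t.1.1 t.1.2 ∧ Incomp t.1.1 t.2 ∧ Incomp t.1.2 t.2) with hTri
  have hne : ∀ t ∈ Tri, t.1.1.Nonempty := by
    intro t ht
    have h1 := (Finset.mem_filter.1 ht).2.1.1
    rw [Finset.nonempty_iff_ne_empty]
    intro he
    exact h1 (by rw [he]; exact Finset.empty_subset _)
  set τ := Tri.attach.image (fun t => t.1.1.1.min' (hne t.1 t.2)) with hτ
  refine ⟨(Finset.univ : Finset (Fin n)) \ τ, ?_, ?_⟩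
  · rintro ⟨X, Y, Z, hX, hY, hZ, h1, h2, h3, i1, i2, i3⟩
    have htmem : ((X, Y), Z) ∈ Tri := Finset.mem_filter.2
      ⟨Finset.mem_product.2 ⟨Finset.mem_product.2 ⟨hX, hY⟩, hZ⟩, i1, i2, i3⟩
    have hxτ : X.min' (hne _ htmem) ∈ τ := by
      rw [hτ]
      exact Finset.mem_image.2 ⟨⟨((X, Y), Z), htmem⟩, Finset.mem_attach _ _, rfl⟩
    have hxW := h1 (Finset.min'_mem X (hne _ htmem))
    exact (Finset.mem_sdiff.1 hxW).2 hxτ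
  · have hτcard : τ.card ≤ 𝒜.card ^ 3 := by
      calc τ.card ≤ Tri.attach.card := Finset.card_image_le
        _ = Tri.card := Finset.card_attach
        _ ≤ ((𝒜 ×ˢ 𝒜) ×ˢ 𝒜).card := Finset.card_filter_le _ _
        _ = 𝒜.card ^ 3 := by
            rw [Finset.card_product, Finset.card_product]; ring
    have hn : n = (Finset.univ : Finset (Fin n)).card := (Finset.card_fin n).symm
    have hsplit : ((Finset.univ : Finset (Fin n)) \ τ).card + τ.card
        = ((Finset.univ : Finset (Fin n)) ∪ τ).card := Finset.card_sdiff_add_card _ _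
    have huniv : (Finset.univ : Finset (Fin n)) ∪ τ = Finset.univ := by
      apply Finset.union_eq_left.2
      exact Finset.subset_univ _
    rw [huniv] at hsplit
    omega

theorem descent {𝒜 : Finset (Finset (Fin n))}
    (hsat : IsSaturatedFamily (Antichain3 ⊕ₗ Q) 𝒜)
    {U : Finset (Fin n)} (hU𝒜 : U ∈ 𝒜) (hUpoor : Poor 𝒜 U) :
    U.card ≤ (∑ B ∈ 𝒜.filter (· ⊂ U), B.card)
      + (𝒜.card ^ (Fintype.card Q) + 𝒜.card + 1) := by
  classical
  set QC : Finset (Q → Finset (Fin n)) := Finset.univ.filter (QCopy 𝒜) with hQCdef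
  have hQCcard : QC.card ≤ 𝒜.card ^ (Fintype.card Q) := by
    have hsub : QC ⊆ Fintype.piFinset (fun _ : Q => 𝒜) := by
      intro h hh
      rw [Fintype.mem_piFinset]
      exact ((Finset.mem_filter.1 hh).2).2.1
    calc QC.card ≤ (Fintype.piFinset (fun _ : Q => 𝒜)).card := Finset.card_le_card hsub
      _ = ∏ _q : Q, 𝒜.card := Fintype.card_piFinset _
      _ = 𝒜.card ^ (Fintype.card Q) := by
          rw [Finset.prod_const, Finset.card_univ]
  set V : Finset (Fin n) := (𝒜.filter (· ⊂ U)).biUnion id with hVdef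
  have hVU : V ⊆ U := by
    rw [hVdef, Finset.biUnion_subset]
    intro B hB
    exact ((Finset.mem_filter.1 hB).2).subset
  have hVcard : V.card ≤ ∑ B ∈ 𝒜.filter (· ⊂ U), B.card := by
    simpa using Finset.card_biUnion_le (s := 𝒜.filter (· ⊂ U)) (t := id)
  set H : Finset (Fin n) := QC.attach.biUnion
    (fun h => if hc : U ⊆ hub h.1 then (∅ : Finset (Fin n))
      else {(U \ hub h.1).min' (Finset.sdiff_nonempty.2 hc)}) with hHdef
  have hHU : H ⊆ U := by
    rw [hHdef, Finset.biUnion_subset]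
    intro h _
    by_cases hc : U ⊆ hub h.1
    · rw [dif_pos hc]
      exact Finset.empty_subset _
    · rw [dif_neg hc]
      intro x hx
      rw [Finset.mem_singleton] at hx
      subst hx
      exact (Finset.mem_sdiff.1 ((U \ hub h.1).min'_mem _)).1
  have hHcard : H.card ≤ QC.card := by
    calc H.card ≤ ∑ h ∈ QC.attach, (if hc : U ⊆ hub h.1 then (∅ : Finset (Fin n))
          else {(U \ hub h.1).min' (Finset.sdiff_nonempty.2 hc)}).card := by
            rw [hHdef]; exact Finset.card_biUnion_le
      _ ≤ ∑ _h ∈ QC.attach, 1 := by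
          apply Finset.sum_le_sum
          intro h _
          by_cases hc : U ⊆ hub h.1
          · rw [dif_pos hc]; simp
          · rw [dif_neg hc]; simp
      _ = QC.card := by rw [Finset.sum_const, smul_eq_mul, mul_one, Finset.card_attach]
  set D : Finset (Fin n) := U \ (V ∪ H) with hDdef
  have hforced : ∀ X ∈ D.powerset, ((V ∪ H) ∪ X) ∈ 𝒜 := by
    intro X hX
    rw [Finset.mem_powerset] at hX
    set S : Finset (Fin n) := (V ∪ H) ∪ X with hSdef
    have hSU : S ⊆ U := by
      rw [hSdef]
      refine Finset.union_subset (Finset.union_subset hVU hHU) ?_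
      exact hX.trans (Finset.sdiff_subset)
    by_contra hS𝒜
    obtain ⟨h, B, C, hQC', hB, hC, iSB, iSC, iBC, hSh, hBh, hCh⟩ :=
      serve hsat hS𝒜 (Poor.mono hSU hUpoor)
    have hhQC : h ∈ QC := Finset.mem_filter.2 ⟨Finset.mem_univ _, hQC'⟩
    have hUhub : U ⊆ hub h := by
      by_contra hc
      have humem : (U \ hub h).min' (Finset.sdiff_nonempty.2 hc) ∈ H := by
        rw [hHdef]
        refine Finset.mem_biUnion.2 ⟨⟨h, hhQC⟩, Finset.mem_attach _ _, ?_⟩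
        rw [dif_neg hc]
        exact Finset.mem_singleton_self _
      have huS : (U \ hub h).min' (Finset.sdiff_nonempty.2 hc) ∈ S := by
        rw [hSdef]
        exact Finset.mem_union_left _ (Finset.mem_union_right _ humem)
      have := hSh huS
      exact (Finset.mem_sdiff.1 ((U \ hub h).min'_mem _)).2 this
    have hcompB : ¬ (B ⊆ U ∨ U ⊆ B) → Incomp U B := fun hc =>
      ⟨fun h1 => hc (Or.inr h1), fun h2 => hc (Or.inl h2)⟩
    have killcomp : ∀ W : Finset (Fin n), W ∈ 𝒜 → Incomp S W → (W ⊆ U ∨ U ⊆ W) → False := by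
      intro W hW iSW hWc
      rcases hWc with hWU | hUW
      · rcases (Finset.le_iff_subset.mpr hWU).lt_or_eq with hlt | heq
        · have hWV : W ⊆ V := by
            rw [hVdef]
            exact Finset.subset_biUnion_of_mem id
              (Finset.mem_filter.2 ⟨hW, Finset.lt_iff_ssubset.mp hlt⟩)
          exact iSW.2 (hWV.trans (Finset.subset_union_left.trans Finset.subset_union_left))
        · exact iSW.1 (heq ▸ hSU)
      · exact iSW.1 (hSU.trans hUW)
    by_cases hBc : B ⊆ U ∨ U ⊆ B
    · exact killcomp B hB iSB hBc
    by_cases hCc : C ⊆ U ∨ U ⊆ C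
    · exact killcomp C hC iSC hCc
    exact hub_poor hsat hQC' ⟨U, B, C, hU𝒜, hB, hC, hUhub, hBh, hCh,
      hcompB hBc, ⟨fun h1 => hCc (Or.inr h1), fun h2 => hCc (Or.inl h2)⟩, iBC⟩
  have hDcard : D.card ≤ 𝒜.card := by
    have hinj : Set.InjOn (fun X => (V ∪ H) ∪ X) D.powerset := by
      intro X1 h1 X2 h2 he
      have key : ∀ X ∈ D.powerset, ((V ∪ H) ∪ X) ∩ D = X := by
        intro X hXp
        rw [Finset.mem_powerset] at hXp
        ext x
        simp only [Finset.mem_inter, Finset.mem_union]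
        constructor
        · rintro ⟨hx1 | hx2, hxD⟩
          · exact absurd (Finset.mem_union.2 hx1) (Finset.mem_sdiff.1 hxD).2
          · exact hx2
        · intro hx
          exact ⟨Or.inr hx, hXp hx⟩
      have h1' := key X1 (by simpa using h1)
      have h2' := key X2 (by simpa using h2)
      have he' : (V ∪ H) ∪ X1 = (V ∪ H) ∪ X2 := he
      calc X1 = ((V ∪ H) ∪ X1) ∩ D := h1'.symm
        _ = ((V ∪ H) ∪ X2) ∩ D := by rw [he']
        _ = X2 := h2'
    have hcard2 : D.powerset.card ≤ 𝒜.card :=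
      Finset.card_le_card_of_injOn _ (fun X hX => hforced X hX) hinj
    rw [Finset.card_powerset] at hcard2
    exact le_trans (le_of_lt (Nat.lt_two_pow_self (n := D.card))) hcard2
  have hUsub : U ⊆ (V ∪ H) ∪ D := by
    intro x hx
    by_cases hc : x ∈ V ∪ H
    · exact Finset.mem_union_left _ hc
    · refine Finset.mem_union_right _ ?_
      rw [hDdef, Finset.mem_sdiff]
      exact ⟨hx, hc⟩
  calc U.card ≤ ((V ∪ H) ∪ D).card := Finset.card_le_card hUsub
    _ ≤ (V ∪ H).card + D.card := Finset.card_union_le _ _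
    _ ≤ (V.card + H.card) + D.card := by
        exact Nat.add_le_add_right (Finset.card_union_le _ _) _
    _ ≤ ((∑ B ∈ 𝒜.filter (· ⊂ U), B.card) + (𝒜.card ^ (Fintype.card Q))) + 𝒜.card := by
        apply Nat.add_le_add
        apply Nat.add_le_add hVcard
        exact le_trans hHcard hQCcard
        exact hDcard
    _ ≤ (∑ B ∈ 𝒜.filter (· ⊂ U), B.card) + (𝒜.card ^ (Fintype.card Q) + 𝒜.card + 1) := by
        omega

theorem sum_rec (Λ : ℕ) (F : Finset (Finset (Fin n)))
    (hF : ∀ U ∈ F, U.card ≤ (∑ B ∈ F.filter (· ⊂ U), B.card) + Λ) :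
    (∑ U ∈ F, U.card) ≤ Λ * (2 ^ F.card - 1) := by
  classical
  revert hF
  induction F using Finset.strongInduction with
  | _ F ih =>
    intro hF
    rcases Finset.eq_empty_or_nonempty F with rfl | hne
    · simp
    obtain ⟨U, hU, hUmax⟩ := F.exists_maximal hne
    set F' := F.erase U with hF'def
    have hss : F' ⊂ F := Finset.erase_ssubset hU
    have hstep : ∀ W ∈ F', W.card ≤ (∑ B ∈ F'.filter (· ⊂ W), B.card) + Λ := by
      intro W hW
      have hWF : W ∈ F := Finset.mem_of_mem_erase hW
      have hfeq : F'.filter (· ⊂ W) = F.filter (· ⊂ W) := by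
        rw [hF'def, Finset.filter_erase]
        apply Finset.erase_eq_of_notMem
        intro hUW
        rw [Finset.mem_filter] at hUW
        exact lt_irrefl U ((Finset.lt_iff_ssubset.2 hUW.2).trans_le (hUmax hWF (Finset.lt_iff_ssubset.2 hUW.2).le))
      rw [hfeq]
      exact hF W hWF
    have ihF' := ih F' hss hstep
    have hUb : U.card ≤ (∑ B ∈ F', B.card) + Λ := by
      refine le_trans (hF U hU) ?_
      apply Nat.add_le_add_right
      apply Finset.sum_le_sum_of_subset
      intro B hB
      rw [Finset.mem_filter] at hB
      exact Finset.mem_erase.2 ⟨hB.2.ne, hB.1⟩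
    have hsum : (∑ x ∈ F', x.card) + U.card = ∑ x ∈ F, x.card :=
      Finset.sum_erase_add F _ hU
    have hcard : F'.card + 1 = F.card := Finset.card_erase_add_one hU
    have hpow : 2 ^ F.card = 2 * 2 ^ F'.card := by
      rw [← hcard, pow_succ]
      ring
    have h1t : 1 ≤ 2 ^ F'.card := Nat.one_le_two_pow
    rw [← hsum, hpow]
    calc (∑ x ∈ F', x.card) + U.card
        ≤ (Λ * (2 ^ F'.card - 1)) + ((Λ * (2 ^ F'.card - 1)) + Λ) := by
          exact Nat.add_le_add ihF' (le_trans hUb (Nat.add_le_add_right ihF' Λ))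
      _ = Λ * ((2 ^ F'.card - 1) + ((2 ^ F'.card - 1) + 1)) := by ring
      _ = Λ * (2 * 2 ^ F'.card - 1) := by
          congr 1
          omega

theorem exists_maximal_poor_above {𝒜 : Finset (Finset (Fin n))} {W : Finset (Fin n)}
    (hW : Poor 𝒜 W) :
    ∃ M, Poor 𝒜 M ∧ W ⊆ M ∧ ∀ T, Poor 𝒜 T → M ⊆ T → T = M := by
  classical
  set PS := (Finset.univ : Finset (Finset (Fin n))).filter (fun T => Poor 𝒜 T ∧ W ⊆ T)
    with hPdef
  have hne : PS.Nonempty :=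
    ⟨W, Finset.mem_filter.2 ⟨Finset.mem_univ _, hW, Finset.Subset.refl _⟩⟩
  obtain ⟨M, hM, hMmax⟩ := PS.exists_maximal hne
  rw [hPdef, Finset.mem_filter] at hM
  refine ⟨M, hM.2.1, hM.2.2, ?_⟩
  intro T hT hMT
  by_contra hne2
  have hTP : T ∈ PS := Finset.mem_filter.2 ⟨Finset.mem_univ _, hT, hM.2.2.trans hMT⟩
  have hlt : M < T := (Finset.lt_iff_ssubset.2
    (Finset.ssubset_iff_subset_ne.2 ⟨hMT, fun h => hne2 h.symm⟩))
  exact lt_irrefl M (hlt.trans_le (hMmax hTP hlt.le))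

theorem card_bound {𝒜 : Finset (Finset (Fin n))}
    (hsat : IsSaturatedFamily (Antichain3 ⊕ₗ Q) 𝒜) :
    n ≤ 𝒜.card ^ 3 + (𝒜.card ^ (Fintype.card Q) + 𝒜.card + 1) * 2 ^ 𝒜.card := by
  classical
  obtain ⟨W, hWpoor, hWcard⟩ := exists_big_poor (n := n) 𝒜
  obtain ⟨M, hMpoor, hWM, hMmax⟩ := exists_maximal_poor_above hWpoor
  have hM𝒜 : M ∈ 𝒜 := maximal_poor_mem hsat hMpoor hMmax
  set F := 𝒜.filter (Poor 𝒜) with hFdef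
  have hMF : M ∈ F := Finset.mem_filter.2 ⟨hM𝒜, hMpoor⟩
  have hrec : ∀ U ∈ F, U.card ≤ (∑ B ∈ F.filter (· ⊂ U), B.card)
      + (𝒜.card ^ (Fintype.card Q) + 𝒜.card + 1) := by
    intro U hU
    rw [hFdef, Finset.mem_filter] at hU
    have hfe : 𝒜.filter (· ⊂ U) = F.filter (· ⊂ U) := by
      ext B
      rw [hFdef]
      simp only [Finset.mem_filter]
      constructor
      · rintro ⟨hB, hBU⟩
        exact ⟨⟨hB, Poor.mono hBU.subset hU.2⟩, hBU⟩
      · rintro ⟨⟨hB, _⟩, hBU⟩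
        exact ⟨hB, hBU⟩
    rw [← hfe]
    exact descent hsat hU.1 hU.2
  have hsums := sum_rec (𝒜.card ^ (Fintype.card Q) + 𝒜.card + 1) F hrec
  have hMle : M.card ≤ ∑ U ∈ F, U.card :=
    Finset.single_le_sum (fun _ _ => Nat.zero_le _) hMF
  have hFcard : F.card ≤ 𝒜.card := Finset.card_filter_le _ _
  have hWMc : W.card ≤ M.card := Finset.card_le_card hWM
  have hp : (𝒜.card ^ (Fintype.card Q) + 𝒜.card + 1) * (2 ^ F.card - 1)
      ≤ (𝒜.card ^ (Fintype.card Q) + 𝒜.card + 1) * 2 ^ 𝒜.card := by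
    apply Nat.mul_le_mul_left
    calc 2 ^ F.card - 1 ≤ 2 ^ F.card := Nat.sub_le _ _
      _ ≤ 2 ^ 𝒜.card := Nat.pow_le_pow_right (by norm_num) hFcard
  omega

theorem exists_saturated :
    ∃ 𝒜 : Finset (Finset (Fin n)), IsSaturatedFamily (Antichain3 ⊕ₗ Q) 𝒜 := by
  classical
  set T : Finset (Finset (Finset (Fin n))) := Finset.univ.filter
    (fun F => ¬ ContainsCopy (Antichain3 ⊕ₗ Q) F) with hT
  have hne : T.Nonempty := by
    refine ⟨∅, Finset.mem_filter.2 ⟨Finset.mem_univ _, ?_⟩⟩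
    rintro ⟨f, _, hmem, _⟩
    exact Finset.notMem_empty _ (hmem (toLex (Sum.inl A0)))
  obtain ⟨𝒜, h𝒜, hmax⟩ := T.exists_maximal hne
  rw [hT, Finset.mem_filter] at h𝒜
  refine ⟨𝒜, h𝒜.2, ?_⟩
  intro S hS
  by_contra hno
  have hlt : 𝒜 < insert S 𝒜 := Finset.lt_iff_ssubset.2 (Finset.ssubset_insert hS)
  have hmemT : insert S 𝒜 ∈ T := Finset.mem_filter.2 ⟨Finset.mem_univ _, hno⟩
  exact lt_irrefl 𝒜 (hlt.trans_le (hmax hmemT hlt.le))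

end S19

/-- For any finite poset `Q`, `sat*(n, Q * A₃) → ∞` as `n → ∞`, where
`A₃` is the 3-element antichain and `Q * A₃` (with `A₃` at the bottom) is encoded as
`Antichain3 ⊕ₗ Q`. -/
theorem statement19 (Q : Type*) [PartialOrder Q] [Fintype Q] :
    Tendsto (fun n => satStar (Antichain3 ⊕ₗ Q) n) atTop atTop := by

  rw [tendsto_atTop_atTop]
  intro K
  refine ⟨K ^ 3 + (K ^ (Fintype.card Q) + K + 1) * 2 ^ K + 1, fun n hn => ?_⟩
  have hex : {k : ℕ | ∃ 𝒜 : Finset (Finset (Fin n)),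
      IsSaturatedFamily (Antichain3 ⊕ₗ Q) 𝒜 ∧ 𝒜.card = k}.Nonempty := by
    obtain ⟨𝒜, h⟩ := S19.exists_saturated (n := n) (Q := Q)
    exact ⟨𝒜.card, 𝒜, h, rfl⟩
  have hmem : satStar (Antichain3 ⊕ₗ Q) n ∈ {k : ℕ | ∃ 𝒜 : Finset (Finset (Fin n)),
      IsSaturatedFamily (Antichain3 ⊕ₗ Q) 𝒜 ∧ 𝒜.card = k} := Nat.sInf_mem hex
  obtain ⟨𝒜, hsat, hcard⟩ := hmem
  have hb := S19.card_bound hsat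
  by_contra hK
  push_neg at hK
  have hm : 𝒜.card ≤ K := by
    rw [hcard]
    exact le_of_lt hK
  have hmono : 𝒜.card ^ 3 + (𝒜.card ^ (Fintype.card Q) + 𝒜.card + 1) * 2 ^ 𝒜.card
      ≤ K ^ 3 + (K ^ (Fintype.card Q) + K + 1) * 2 ^ K := by
    gcongr <;> norm_num
  omega
end
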